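/- Let X be a set and k : X × X → ℝ a symmetric positive-semidefinite kernel with k(x,x) ≤ 1 for all x ∈ X. Fix N ≥ 1 and set λ = 1 + 2/N. For any points x_1,…,x_N ∈ X, let σ_{i−1}(x) = sqrt( k(x,x) − k_{i−1}(x)ᵀ(K_{i−1} + λI)⁻¹ k_{i−1}(x) ) be the posterior standard deviation from the first i−1 points (σ_0(x) = sqrt(k(x,x))), and let γ_N = (1/2) log det(I_N + λ⁻¹ K_N) with K_N = [k(x_i,x_j)]_{i,j=1}^N. Then Σ_{i=1}^N σ_{i−1}(x_i) ≤ sqrt(4 (N+2) γ_N). -/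

import Mathlib

open Matrix

/-- Kernel matrix of the first `t` points `x 1, …, x t`. -/
noncomputable def kerMat {X : Type*} (k : X → X → ℝ) (x : ℕ → X) (t : ℕ) :
    Matrix (Fin t) (Fin t) ℝ :=
  Matrix.of fun i j : Fin t => k (x (i.1 + 1)) (x (j.1 + 1))

/-- Kernel vector `(k(y, x 1), …, k(y, x t))`. -/
noncomputable def kerVec {X : Type*} (k : X → X → ℝ) (x : ℕ → X) (t : ℕ) (y : X) :
    Fin t → ℝ :=
  fun i : Fin t => k y (x (i.1 + 1))

/-- Probabilistic least-squares estimator `π̂_t(y) = k_t(y)ᵀ (K_t + λ I)⁻¹ z_{1:t}`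
(with the convention `π̂_0 ≡ 0`). -/
noncomputable def plsEstimator {X : Type*} (k : X → X → ℝ) (x : ℕ → X) (z : ℕ → ℝ)
    (lam : ℝ) (t : ℕ) (y : X) : ℝ :=
  kerVec k x t y ⬝ᵥ
    ((kerMat k x t + lam • (1 : Matrix (Fin t) (Fin t) ℝ))⁻¹ *ᵥ fun i : Fin t => z (i.1 + 1))

/-- Posterior variance `σ_t²(y) = k(y,y) - k_t(y)ᵀ (K_t + λ I)⁻¹ k_t(y)`
(with the convention `σ_0²(y) = k(y,y)`). -/
noncomputable def postVar {X : Type*} (k : X → X → ℝ) (x : ℕ → X) (lam : ℝ) (t : ℕ)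
    (y : X) : ℝ :=
  k y y - kerVec k x t y ⬝ᵥ
    ((kerMat k x t + lam • (1 : Matrix (Fin t) (Fin t) ℝ))⁻¹ *ᵥ kerVec k x t y)

/-- Posterior standard deviation `σ_t(y)`. -/
noncomputable def postStd {X : Type*} (k : X → X → ℝ) (x : ℕ → X) (lam : ℝ) (t : ℕ)
    (y : X) : ℝ :=
  Real.sqrt (postVar k x lam t y)

/-- A kernel is symmetric positive semidefinite if every finite kernel matrix is
positive semidefinite. -/
def IsPSDKernel {X : Type*} (k : X → X → ℝ) : Prop :=
  ∀ (m : ℕ) (y : Fin m → X), (Matrix.of fun i j : Fin m => k (y i) (y j)).PosSemidef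

/-- Information gain `γ_t = (1/2) log det (I + λ⁻¹ K_t)` of the points `x 1, …, x t`. -/
noncomputable def infoGain {X : Type*} (k : X → X → ℝ) (x : ℕ → X) (lam : ℝ) (t : ℕ) : ℝ :=
  (1 / 2 : ℝ) * Real.log (1 + lam⁻¹ • kerMat k x t).det

namespace SPSL
variable {X : Type*}
noncomputable def AM (k : X → X → ℝ) (x : ℕ → X) (lam : ℝ) (t : ℕ) :
    Matrix (Fin t) (Fin t) ℝ :=
  kerMat k x t + lam • (1 : Matrix (Fin t) (Fin t) ℝ)
lemma kerMat_posSemidef (k : X → X → ℝ) (hpsd : IsPSDKernel k) (x : ℕ → X) (t : ℕ) :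
    (kerMat k x t).PosSemidef := hpsd t fun i => x (i.1 + 1)
lemma smul_one_posDef {t : ℕ} {c : ℝ} (hc : 0 < c) :
    (c • (1 : Matrix (Fin t) (Fin t) ℝ)).PosDef := by
  rw [Matrix.smul_one_eq_diagonal]
  exact Matrix.posDef_diagonal_iff.mpr fun _ => hc
lemma psd_add {n : Type*} [Fintype n] {M N : Matrix n n ℝ}
    (hM : M.PosSemidef) (hN : N.PosSemidef) : (M + N).PosSemidef :=
  .of_dotProduct_mulVec_nonneg (hM.1.add hN.1) fun y => by
    rw [Matrix.add_mulVec, dotProduct_add]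
    exact add_nonneg (hM.dotProduct_mulVec_nonneg y) (hN.dotProduct_mulVec_nonneg y)
lemma posSemidef_add_posDef {n : Type*} [Fintype n] {M N : Matrix n n ℝ}
    (hM : M.PosSemidef) (hN : N.PosDef) : (M + N).PosDef :=
  .of_dotProduct_mulVec_pos (hM.1.add hN.1) fun y hy => by
    rw [Matrix.add_mulVec, dotProduct_add]
    exact add_pos_of_nonneg_of_pos (hM.dotProduct_mulVec_nonneg y) (hN.dotProduct_mulVec_pos hy)
lemma AM_posDef (k : X → X → ℝ) (hpsd : IsPSDKernel k) (x : ℕ → X) {lam : ℝ}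
    (hlam : 0 < lam) (t : ℕ) : (AM k x lam t).PosDef :=
  posSemidef_add_posDef (kerMat_posSemidef k hpsd x t) (smul_one_posDef hlam)
lemma kerMat_succ_block (k : X → X → ℝ) (hsymm : ∀ a b : X, k a b = k b a)
    (x : ℕ → X) (t : ℕ) :
    Matrix.fromBlocks (kerMat k x t)
      (Matrix.replicateCol (Fin 1) (kerVec k x t (x (t + 1))))
      (Matrix.replicateRow (Fin 1) (kerVec k x t (x (t + 1))))
      (Matrix.of fun _ _ => k (x (t + 1)) (x (t + 1)))
    = (kerMat k x (t + 1)).submatrix finSumFinEquiv finSumFinEquiv := by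
  ext i j
  rcases i with a | a <;> rcases j with b | b <;>
    simp [kerMat, kerVec, hsymm (x (t+1)), Fin.val_eq_zero]

lemma AM_succ_block (k : X → X → ℝ) (hsymm : ∀ a b : X, k a b = k b a)
    (x : ℕ → X) (lam : ℝ) (t : ℕ) :
    Matrix.fromBlocks (AM k x lam t)
      (Matrix.replicateCol (Fin 1) (kerVec k x t (x (t + 1))))
      (Matrix.replicateRow (Fin 1) (kerVec k x t (x (t + 1))))
      (Matrix.of fun _ _ => k (x (t + 1)) (x (t + 1)) + lam)
    = (AM k x lam (t + 1)).submatrix finSumFinEquiv finSumFinEquiv := by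
  have h1 : (Matrix.of fun _ _ : Fin 1 => k (x (t + 1)) (x (t + 1)) + lam)
      = (Matrix.of fun _ _ : Fin 1 => k (x (t + 1)) (x (t + 1)))
        + lam • (1 : Matrix (Fin 1) (Fin 1) ℝ) := by
    ext i j
    fin_cases i; fin_cases j
    simp [Matrix.one_apply]
  simp only [AM]
  calc fromBlocks (kerMat k x t + lam • 1) (replicateCol (Fin 1) (kerVec k x t (x (t + 1))))
        (replicateRow (Fin 1) (kerVec k x t (x (t + 1))))
        (of fun _ _ => k (x (t + 1)) (x (t + 1)) + lam)
      = fromBlocks (kerMat k x t) (replicateCol (Fin 1) (kerVec k x t (x (t + 1))))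
          (replicateRow (Fin 1) (kerVec k x t (x (t + 1))))
          (of fun _ _ => k (x (t + 1)) (x (t + 1)))
        + fromBlocks (lam • 1) 0 0 (lam • 1) := by
        rw [Matrix.fromBlocks_add, h1]; simp
    _ = (kerMat k x (t+1)).submatrix finSumFinEquiv finSumFinEquiv
        + (lam • (1 : Matrix (Fin (t+1)) (Fin (t+1)) ℝ)).submatrix finSumFinEquiv finSumFinEquiv := by
        rw [kerMat_succ_block k hsymm x t]
        congr 1
        ext i j
        rcases i with a | a <;> rcases j with b | b <;>
          simp [Matrix.one_apply, EmbeddingLike.apply_eq_iff_eq, Fin.ext_iff,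
            Fin.val_eq_zero, a.2.ne, b.2.ne]
        exact fun h => absurd h (ne_of_gt b.2)
    _ = (kerMat k x (t + 1) + lam • 1).submatrix finSumFinEquiv finSumFinEquiv := by
        ext i j; simp

lemma row_mul_mat_mul_col {t : ℕ} (v w : Fin t → ℝ) (B : Matrix (Fin t) (Fin t) ℝ) :
    (Matrix.replicateRow (Fin 1) v * B * Matrix.replicateCol (Fin 1) w) 0 0 = v ⬝ᵥ B *ᵥ w := by
  rw [Matrix.mul_assoc, ← Matrix.replicateCol_mulVec, Matrix.replicateRow_mul_replicateCol_apply]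

lemma one_dim_nonneg {M : Matrix (Fin 1) (Fin 1) ℝ} (h : M.PosSemidef) : 0 ≤ M 0 0 := by
  simpa [dotProduct, Matrix.mulVec, Fin.sum_univ_one] using h.dotProduct_mulVec_nonneg (fun _ => 1)

lemma row_eq_conjTranspose_col {t : ℕ} (v : Fin t → ℝ) :
    Matrix.replicateRow (Fin 1) v = (Matrix.replicateCol (Fin 1) v)ᴴ := by
  ext i j; simp [Matrix.conjTranspose_apply]

lemma postVar_nonneg (k : X → X → ℝ) (hsymm : ∀ a b : X, k a b = k b a)
    (hpsd : IsPSDKernel k) (x : ℕ → X) {lam : ℝ} (hlam : 0 < lam) (t : ℕ) :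
    0 ≤ postVar k x lam t (x (t + 1)) := by
  set v := kerVec k x t (x (t + 1)) with hv
  have hA := AM_posDef k hpsd x hlam t
  -- extended regularized-in-the-corner matrix is PSD
  have h0 : (Matrix.fromBlocks (kerMat k x t) (Matrix.replicateCol (Fin 1) v) (Matrix.replicateRow (Fin 1) v)
      (Matrix.of fun _ _ => k (x (t + 1)) (x (t + 1)))).PosSemidef := by
    rw [hv, kerMat_succ_block k hsymm x t]
    exact (kerMat_posSemidef k hpsd x (t + 1)).submatrix _
  have h1 : (Matrix.fromBlocks (lam • (1 : Matrix (Fin t) (Fin t) ℝ)) 0 0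
      (0 : Matrix (Fin 1) (Fin 1) ℝ)).PosSemidef := by
    rw [Matrix.smul_one_eq_diagonal, ← Matrix.diagonal_zero, Matrix.fromBlocks_diagonal]
    refine Matrix.PosSemidef.diagonal ?_
    intro i
    rcases i with i | i <;> simp [hlam.le]
  have hM : (Matrix.fromBlocks (AM k x lam t) (Matrix.replicateCol (Fin 1) v) (Matrix.replicateRow (Fin 1) v)
      (Matrix.of fun _ _ => k (x (t + 1)) (x (t + 1)))).PosSemidef := by
    have h2 := psd_add h0 h1
    rw [Matrix.fromBlocks_add] at h2
    simpa [AM] using h2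
  rw [row_eq_conjTranspose_col] at hM
  haveI := hA.isUnit.invertible
  have hschur := (Matrix.PosDef.fromBlocks₁₁ (Matrix.replicateCol (Fin 1) v)
      (Matrix.of fun _ _ => k (x (t + 1)) (x (t + 1))) hA).mp hM
  have h00 := one_dim_nonneg hschur
  rw [Matrix.sub_apply, ← row_eq_conjTranspose_col, row_mul_mat_mul_col] at h00
  simpa [postVar, AM] using h00


lemma quad_nonneg (k : X → X → ℝ) (hpsd : IsPSDKernel k) (x : ℕ → X) {lam : ℝ}
    (hlam : 0 < lam) (t : ℕ) (v : Fin t → ℝ) :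
    0 ≤ v ⬝ᵥ (AM k x lam t)⁻¹ *ᵥ v := by
  simpa using ((AM_posDef k hpsd x hlam t).inv).posSemidef.dotProduct_mulVec_nonneg v

lemma postVar_le_one (k : X → X → ℝ) (hpsd : IsPSDKernel k) (hbdd : ∀ y : X, k y y ≤ 1)
    (x : ℕ → X) {lam : ℝ} (hlam : 0 < lam) (t : ℕ) (y : X) :
    postVar k x lam t y ≤ 1 := by
  have h := quad_nonneg k hpsd x hlam t (kerVec k x t y)
  have h2 := hbdd y
  simp only [postVar, AM] at h ⊢
  linarith

lemma det_AM_succ (k : X → X → ℝ) (hsymm : ∀ a b : X, k a b = k b a)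
    (hpsd : IsPSDKernel k) (x : ℕ → X) {lam : ℝ} (hlam : 0 < lam) (t : ℕ) :
    (AM k x lam (t + 1)).det = (AM k x lam t).det * (lam + postVar k x lam t (x (t + 1))) := by
  haveI := (AM_posDef k hpsd x hlam t).isUnit.invertible
  rw [← Matrix.det_submatrix_equiv_self finSumFinEquiv (AM k x lam (t + 1)),
    ← AM_succ_block k hsymm x lam t, Matrix.det_fromBlocks₁₁, Matrix.invOf_eq_nonsing_inv]
  congr 1
  rw [Matrix.det_fin_one, Matrix.sub_apply, row_mul_mat_mul_col]
  simp only [postVar, AM, Matrix.of_apply]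
  ring

lemma det_AM_eq_prod (k : X → X → ℝ) (hsymm : ∀ a b : X, k a b = k b a)
    (hpsd : IsPSDKernel k) (x : ℕ → X) {lam : ℝ} (hlam : 0 < lam) (N : ℕ) :
    (AM k x lam N).det = ∏ i ∈ Finset.range N, (lam + postVar k x lam i (x (i + 1))) := by
  induction N with
  | zero => simp [Matrix.det_fin_zero]
  | succ n ih => rw [det_AM_succ k hsymm hpsd x hlam n, ih, Finset.prod_range_succ]


lemma two_infoGain_eq (k : X → X → ℝ) (hsymm : ∀ a b : X, k a b = k b a)
    (hpsd : IsPSDKernel k) (x : ℕ → X) {lam : ℝ} (hlam : 0 < lam) (N : ℕ) :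
    2 * infoGain k x lam N
      = ∑ i ∈ Finset.range N, Real.log (1 + postVar k x lam i (x (i + 1)) / lam) := by
  have h1 : (1 + lam⁻¹ • kerMat k x N) = lam⁻¹ • AM k x lam N := by
    rw [AM, smul_add, smul_smul, inv_mul_cancel₀ hlam.ne', one_smul, add_comm]
  have hnn : ∀ i ∈ Finset.range N, (0:ℝ) < 1 + postVar k x lam i (x (i + 1)) / lam :=
    fun i _ => by
      have := postVar_nonneg k hsymm hpsd x hlam i
      positivity
  rw [infoGain, h1, Matrix.det_smul, det_AM_eq_prod k hsymm hpsd x hlam N]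
  have hpow : (lam⁻¹) ^ N = ∏ _i ∈ Finset.range N, lam⁻¹ := by simp
  rw [Fintype.card_fin, hpow, ← Finset.prod_mul_distrib]
  have h2 : ∀ i ∈ Finset.range N,
      lam⁻¹ * (lam + postVar k x lam i (x (i + 1)))
        = 1 + postVar k x lam i (x (i + 1)) / lam := fun i _ => by
    field_simp
  rw [Finset.prod_congr rfl h2, Real.log_prod (fun i hi => (hnn i hi).ne')]
  ring

lemma le_two_lam_log {lam s : ℝ} (hlam : 1 ≤ lam) (h0 : 0 ≤ s) (h1 : s ≤ 1) :
    s ≤ 2 * lam * Real.log (1 + s / lam) := by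
  have hl : (0:ℝ) < lam := lt_of_lt_of_le one_pos hlam
  have hu : 0 ≤ s / lam := by positivity
  have hx : (0:ℝ) < 1 + s / lam := by linarith
  have hlog : 1 - (1 + s / lam)⁻¹ ≤ Real.log (1 + s / lam) := by
    have := Real.log_le_sub_one_of_pos (inv_pos.mpr hx)
    rw [Real.log_inv] at this
    linarith
  have hinv : (1 + s / lam)⁻¹ = lam / (lam + s) := by
    rw [eq_div_iff (by positivity : lam + s ≠ 0)]
    field_simp
  have h2 : s ≤ 2 * lam * (1 - (1 + s / lam)⁻¹) := by
    have h3 : 2 * lam * (1 - lam / (lam + s)) = 2 * lam * s / (lam + s) := by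
      field_simp
      ring
    rw [hinv, h3, le_div_iff₀ (by linarith : (0:ℝ) < lam + s)]
    nlinarith
  nlinarith [mul_le_mul_of_nonneg_left hlog (by linarith : (0:ℝ) ≤ 2 * lam)]

end SPSL

/-- **Lemma A.2 (Chowdhury & Gopalan, Lemma 4).** For a symmetric PSD kernel with
`k(y,y) ≤ 1` and `λ = 1 + 2/N`, the sum of sequential posterior standard
deviations along the queried points is bounded by the information gain:
`Σ_{i=1}^N σ_{i-1}(x_i) ≤ √(4 (N+2) γ_N)`. -/
theorem sum_posterior_std_le {X : Type*} (k : X → X → ℝ)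
    (hsymm : ∀ a b : X, k a b = k b a) (hpsd : IsPSDKernel k)
    (hbdd : ∀ y : X, k y y ≤ 1)
    (N : ℕ) (hN : 1 ≤ N) (lam : ℝ) (hlam : lam = 1 + 2 / (N : ℝ)) (x : ℕ → X) :
    ∑ i ∈ Finset.range N, postStd k x lam i (x (i + 1)) ≤
      Real.sqrt (4 * ((N : ℝ) + 2) * infoGain k x lam N) := by
  have hN0 : (0:ℝ) < N := by exact_mod_cast hN
  have hlam1 : 1 ≤ lam := by
    have : (0:ℝ) ≤ 2 / (N:ℝ) := by positivity
    rw [hlam]; linarith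
  have hlam0 : 0 < lam := lt_of_lt_of_le one_pos hlam1
  simp only [postStd]
  set s : ℕ → ℝ := fun i => postVar k x lam i (x (i + 1)) with hsdef
  have hs0 : ∀ i, 0 ≤ s i := fun i => SPSL.postVar_nonneg k hsymm hpsd x hlam0 i
  have hs1 : ∀ i, s i ≤ 1 := fun i => SPSL.postVar_le_one k hpsd hbdd x hlam0 i _
  have hγ : 2 * infoGain k x lam N = ∑ i ∈ Finset.range N, Real.log (1 + s i / lam) :=
    SPSL.two_infoGain_eq k hsymm hpsd x hlam0 N
  have hγ0 : 0 ≤ infoGain k x lam N := by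
    have h := Finset.sum_nonneg (f := fun i => Real.log (1 + s i / lam))
      (s := Finset.range N) fun i _ =>
        Real.log_nonneg (by nlinarith [div_nonneg (hs0 i) hlam0.le])
    linarith
  have hsum : ∑ i ∈ Finset.range N, s i ≤ 2 * lam * (2 * infoGain k x lam N) := by
    rw [hγ, Finset.mul_sum]
    exact Finset.sum_le_sum fun i _ => SPSL.le_two_lam_log hlam1 (hs0 i) (hs1 i)
  have hCS : (∑ i ∈ Finset.range N, Real.sqrt (s i)) ^ 2
      ≤ (N:ℝ) * ∑ i ∈ Finset.range N, s i := by
    have h := Finset.sum_mul_sq_le_sq_mul_sq (Finset.range N)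
      (fun i => Real.sqrt (s i)) (fun _ => 1)
    simp only [mul_one, one_pow, Finset.sum_const, Finset.card_range, nsmul_eq_mul] at h
    have h2 : ∀ i ∈ Finset.range N, Real.sqrt (s i) ^ 2 = s i := fun i _ =>
      Real.sq_sqrt (hs0 i)
    rw [Finset.sum_congr rfl h2] at h
    linarith
  have hNlam : (N:ℝ) * lam = (N:ℝ) + 2 := by
    rw [hlam]; field_simp
  have hsq : (∑ i ∈ Finset.range N, Real.sqrt (s i)) ^ 2
      ≤ 4 * ((N:ℝ) + 2) * infoGain k x lam N := by
    have h3 : (N:ℝ) * (2 * lam * (2 * infoGain k x lam N))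
        = 4 * ((N:ℝ) * lam) * infoGain k x lam N := by ring
    have h4 := mul_le_mul_of_nonneg_left hsum hN0.le
    rw [h3, hNlam] at h4
    linarith
  have hsqrt0 : 0 ≤ ∑ i ∈ Finset.range N, Real.sqrt (s i) :=
    Finset.sum_nonneg fun i _ => Real.sqrt_nonneg _
  exact (Real.le_sqrt hsqrt0 (by positivity)).mpr hsq
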